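/- Let X be a σ-compact locally compact Hausdorff space, ν a Borel measure on X that is finite on compact sets (with X the countable union of an increasing family of relatively compact sets covering X up to ν-null sets), H a complex Hilbert space, and ψ : X → H a total family such that for every f ∈ H the function x ↦ ⟨ψ_x, f⟩ is ν-measurable and locally ν-integrable. Define the synthesis operator D with domain Dom(D) = {F ∈ L²(X, ν) : there exists g ∈ H such that for every f ∈ H the function x ↦ conj(F(x))·⟨ψ_x, f⟩ is ν-integrable and ∫_X conj(F(x))·⟨ψ_x, f⟩ dν(x) = ⟨g, f⟩}, with D F := g. Then Dom(D) is dense in L²(X, ν), and the adjoint of D equals the analysis operator C: Dom(D*) = Dom(C) = {f ∈ H : x ↦ ⟨ψ_x, f⟩ ∈ L²(X, ν)} and D* f = C f for every f ∈ Dom(C). -/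

import Mathlib

open MeasureTheory Filter
open scoped ComplexInnerProductSpace ENNReal Topology

section Aux

variable {X : Type*} [TopologicalSpace X] [T2Space X] [LocallyCompactSpace X] [SigmaCompactSpace X]
    [MeasurableSpace X] [BorelSpace X] (ν : Measure X) [IsFiniteMeasureOnCompacts ν]
    {H : Type*} [NormedAddCommGroup H] [InnerProductSpace ℂ H] [CompleteSpace H]
    (ψ : X → H)

/-- Via the closed graph theorem: the analysis map into `L¹` of a compact set is bounded. -/
lemma coeff_L1_bound
    (hloc : ∀ (f : H) (K : Set X), IsCompact K → IntegrableOn (fun x => ⟪ψ x, f⟫) K ν)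
    {K : Set X} (hK : IsCompact K) :
    ∃ C : ℝ, 0 ≤ C ∧ ∀ f : H, ∫ x in K, ‖⟪ψ x, f⟫‖ ∂ν ≤ C * ‖f‖ := by
  haveI : Fact ((1 : ℝ≥0∞) ≤ 1) := ⟨le_refl _⟩
  set μK := ν.restrict K with hμK
  have mem1 : ∀ f : H, MemLp (fun x => ⟪ψ x, f⟫) 1 μK := fun f =>
    memLp_one_iff_integrable.mpr (hloc f K hK)
  let T : H →ₗ[ℂ] Lp ℂ 1 μK :=
    { toFun := fun f => (mem1 f).toLp _
      map_add' := fun f g => by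
        refine Lp.ext ?_
        filter_upwards [(mem1 (f + g)).coeFn_toLp,
          Lp.coeFn_add ((mem1 f).toLp _) ((mem1 g).toLp _),
          (mem1 f).coeFn_toLp, (mem1 g).coeFn_toLp] with x h1 h2 h3 h4
        rw [h1, h2, Pi.add_apply, h3, h4, inner_add_right]
      map_smul' := fun a f => by
        refine Lp.ext ?_
        filter_upwards [(mem1 (a • f)).coeFn_toLp, Lp.coeFn_smul a ((mem1 f).toLp _),
          (mem1 f).coeFn_toLp] with x h1 h2 h3
        simp only [RingHom.id_apply]
        rw [h1, h2, Pi.smul_apply, h3, inner_smul_right, smul_eq_mul] }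
  have hTcont : Continuous T := by
    refine T.continuous_of_seq_closed_graph ?_
    intro u x y hu hTu
    have hm : TendstoInMeasure μK (fun n => ((T (u n) : Lp ℂ 1 μK) : X → ℂ)) atTop
        ((y : Lp ℂ 1 μK) : X → ℂ) :=
      tendstoInMeasure_of_tendsto_Lp hTu
    obtain ⟨ns, hns, hae⟩ := hm.exists_seq_tendsto_ae
    have hcoe : ∀ᵐ z ∂μK, ∀ n, ((T (u n) : Lp ℂ 1 μK) : X → ℂ) z = ⟪ψ z, u n⟫ :=
      ae_all_iff.mpr fun n => (mem1 (u n)).coeFn_toLp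
    show y = (mem1 x).toLp (fun z => ⟪ψ z, x⟫)
    refine Lp.ext ?_
    filter_upwards [hae, hcoe, (mem1 x).coeFn_toLp] with z hz hzc hzx
    have h2 : Tendsto (fun i => ⟪ψ z, u (ns i)⟫) atTop (𝓝 (y z)) := by
      simpa only [hzc] using hz
    have h3 : Tendsto (fun i => ⟪ψ z, u (ns i)⟫) atTop (𝓝 ⟪ψ z, x⟫) :=
      tendsto_const_nhds.inner (hu.comp hns.tendsto_atTop)
    rw [hzx]
    exact tendsto_nhds_unique h2 h3
  let T' : H →L[ℂ] Lp ℂ 1 μK := ⟨T, hTcont⟩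
  refine ⟨‖T'‖, norm_nonneg _, fun f => ?_⟩
  have h1 : ∫ x in K, ‖⟪ψ x, f⟫‖ ∂ν = ‖T' f‖ := by
    rw [L1.norm_eq_integral_norm]
    refine (integral_congr_ae ?_).symm
    filter_upwards [(mem1 f).coeFn_toLp] with z hz
    exact congrArg norm hz
  rw [h1]
  exact T'.le_opNorm f

/-- Any element of `L²` which is a.e. bounded and supported in a compact set belongs to the
domain of the weak synthesis operator. -/
lemma mem_domD
    (hmeas : ∀ f : H, AEMeasurable (fun x => ⟪ψ x, f⟫) ν)
    (hloc : ∀ (f : H) (K : Set X), IsCompact K → IntegrableOn (fun x => ⟪ψ x, f⟫) K ν)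
    {K : Set X} (hK : IsCompact K) (F : Lp ℂ 2 ν) {c : ℝ} (hc : 0 ≤ c)
    (hbd : ∀ᵐ x ∂ν, ‖F x‖ ≤ K.indicator (fun _ => c) x) :
    ∃ g : H, ∀ f : H,
      Integrable (fun x => (starRingEnd ℂ) (F x) * ⟪ψ x, f⟫) ν ∧
      ∫ x, (starRingEnd ℂ) (F x) * ⟪ψ x, f⟫ ∂ν = ⟪g, f⟫ := by
  obtain ⟨C, hC0, hCb⟩ := coeff_L1_bound ν ψ hloc hK
  have hptw : ∀ f : H, ∀ᵐ x ∂ν, ‖(starRingEnd ℂ) (F x) * ⟪ψ x, f⟫‖ ≤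
      K.indicator (fun x => c * ‖⟪ψ x, f⟫‖) x := by
    intro f
    filter_upwards [hbd] with x hx
    rw [norm_mul, RCLike.norm_conj]
    by_cases hxK : x ∈ K
    · rw [Set.indicator_of_mem hxK] at hx ⊢
      exact mul_le_mul_of_nonneg_right hx (norm_nonneg _)
    · rw [Set.indicator_of_notMem hxK] at hx ⊢
      have h0 : ‖F x‖ = 0 := le_antisymm hx (norm_nonneg _)
      simp [h0]
  have hbddInt : ∀ f : H, Integrable (K.indicator fun x => c * ‖⟪ψ x, f⟫‖) ν := fun f =>
    MeasureTheory.IntegrableOn.integrable_indicator (((hloc f K hK).norm).const_mul c)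
      hK.measurableSet
  have hint : ∀ f : H, Integrable (fun x => (starRingEnd ℂ) (F x) * ⟪ψ x, f⟫) ν := by
    intro f
    have hsm : AEStronglyMeasurable (fun x => (starRingEnd ℂ) (F x) * ⟪ψ x, f⟫) ν :=
      (RCLike.continuous_conj.comp_aestronglyMeasurable (Lp.aestronglyMeasurable F)).mul
        (hmeas f).aestronglyMeasurable
    exact Integrable.mono' (hbddInt f) hsm (hptw f)
  let φ : H →ₗ[ℂ] ℂ :=
    { toFun := fun f => ∫ x, (starRingEnd ℂ) (F x) * ⟪ψ x, f⟫ ∂ν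
      map_add' := fun f g => by
        simp_rw [inner_add_right, mul_add]
        exact integral_add (hint f) (hint g)
      map_smul' := fun a f => by
        simp_rw [inner_smul_right, RingHom.id_apply, smul_eq_mul, mul_left_comm]
        exact integral_const_mul a _ }
  have hφb : ∀ f : H, ‖φ f‖ ≤ C * c * ‖f‖ := by
    intro f
    have h1 : ‖φ f‖ ≤ ∫ x, ‖(starRingEnd ℂ) (F x) * ⟪ψ x, f⟫‖ ∂ν :=
      norm_integral_le_integral_norm _
    have h2 : ∫ x, ‖(starRingEnd ℂ) (F x) * ⟪ψ x, f⟫‖ ∂ν ≤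
        ∫ x, K.indicator (fun x => c * ‖⟪ψ x, f⟫‖) x ∂ν :=
      integral_mono_ae (hint f).norm (hbddInt f) (hptw f)
    have h3 : ∫ x, K.indicator (fun x => c * ‖⟪ψ x, f⟫‖) x ∂ν =
        c * ∫ x in K, ‖⟪ψ x, f⟫‖ ∂ν := by
      rw [integral_indicator hK.measurableSet, integral_const_mul]
    have h4 : c * ∫ x in K, ‖⟪ψ x, f⟫‖ ∂ν ≤ c * (C * ‖f‖) :=
      mul_le_mul_of_nonneg_left (hCb f) hc
    calc ‖φ f‖ ≤ ∫ x, ‖(starRingEnd ℂ) (F x) * ⟪ψ x, f⟫‖ ∂ν := h1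
      _ ≤ ∫ x, K.indicator (fun x => c * ‖⟪ψ x, f⟫‖) x ∂ν := h2
      _ = c * ∫ x in K, ‖⟪ψ x, f⟫‖ ∂ν := h3
      _ ≤ c * (C * ‖f‖) := h4
      _ = C * c * ‖f‖ := by ring
  let φc : H →L[ℂ] ℂ := LinearMap.mkContinuous φ (C * c) hφb
  refine ⟨(InnerProductSpace.toDual ℂ H).symm φc, fun f => ⟨hint f, ?_⟩⟩
  exact (InnerProductSpace.toDual_symm_apply (𝕜 := ℂ) (E := H) (y := φc) (x := f)).symm

/-- Core identification: any vector in the weak adjoint domain has its "adjoint value"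
equal a.e. to the coefficient function. -/
lemma adjoint_ae_eq
    (hmeas : ∀ f : H, AEMeasurable (fun x => ⟪ψ x, f⟫) ν)
    (hloc : ∀ (f : H) (K : Set X), IsCompact K → IntegrableOn (fun x => ⟪ψ x, f⟫) K ν)
    (f : H) (h : Lp ℂ 2 ν)
    (hprop : ∀ (F : Lp ℂ 2 ν) (g : H),
      (∀ f' : H, Integrable (fun x => (starRingEnd ℂ) (F x) * ⟪ψ x, f'⟫) ν ∧
        ∫ x, (starRingEnd ℂ) (F x) * ⟪ψ x, f'⟫ ∂ν = ⟪g, f'⟫) →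
      ⟪h, F⟫ = ⟪f, g⟫) :
    (h : X → ℂ) =ᵐ[ν] fun x => ⟪ψ x, f⟫ := by
  haveI : Fact ((1 : ℝ≥0∞) ≤ 2) := fact_one_le_two_ennreal
  have key : ∀ (A : Set X) (hA : MeasurableSet A) (hAfin : ν A ≠ ⊤),
      (∃ n : ℕ, A ⊆ compactCovering X n) →
      ∫ x in A, (h : X → ℂ) x ∂ν = ∫ x in A, ⟪ψ x, f⟫ ∂ν := by
    rintro A hA hAfin ⟨n, hAK⟩
    set F := indicatorConstLp 2 hA hAfin (1 : ℂ) with hFdef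
    have hFcoe : (F : X → ℂ) =ᵐ[ν] A.indicator fun _ => (1 : ℂ) := indicatorConstLp_coeFn
    have hbd : ∀ᵐ x ∂ν, ‖F x‖ ≤ (compactCovering X n).indicator (fun _ => (1 : ℝ)) x := by
      filter_upwards [hFcoe] with x hx
      rw [hx]
      by_cases hxA : x ∈ A
      · rw [Set.indicator_of_mem hxA, Set.indicator_of_mem (hAK hxA)]; simp
      · rw [Set.indicator_of_notMem hxA]
        simp only [norm_zero]
        exact Set.indicator_nonneg (fun _ _ => zero_le_one) x
    obtain ⟨g, hg⟩ := mem_domD ν ψ hmeas hloc (isCompact_compactCovering X n) F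
      zero_le_one hbd
    have h1 := hprop F g hg
    have h2 : ⟪h, F⟫ = (starRingEnd ℂ) (∫ x in A, (h : X → ℂ) x ∂ν) := by
      rw [← inner_conj_symm h F, L2.inner_indicatorConstLp_one hA hAfin h]
    have h3 : ⟪f, g⟫ = (starRingEnd ℂ) (∫ x in A, ⟪ψ x, f⟫ ∂ν) := by
      rw [← inner_conj_symm f g, ← (hg f).2]
      congr 1
      rw [← integral_indicator hA]
      refine integral_congr_ae ?_
      filter_upwards [hFcoe] with x hx
      rw [hx]
      by_cases hxA : x ∈ A
      · rw [Set.indicator_of_mem hxA, Set.indicator_of_mem hxA]; simp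
      · rw [Set.indicator_of_notMem hxA, Set.indicator_of_notMem hxA]; simp
    rw [h2, h3] at h1
    exact (starRingEnd ℂ).injective h1
  have hres : ∀ n : ℕ,
      (h : X → ℂ) =ᵐ[ν.restrict (compactCovering X n)] fun x => ⟪ψ x, f⟫ := by
    intro n
    set K := compactCovering X n with hKdef
    have hKc : IsCompact K := isCompact_compactCovering X n
    haveI : IsFiniteMeasure (ν.restrict K) :=
      ⟨by rw [Measure.restrict_apply_univ]; exact hKc.measure_lt_top⟩
    refine ae_eq_of_forall_setIntegral_eq_of_sigmaFinite ?_ ?_ ?_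
    · intro s _ _
      have hm2 : MemLp (h : X → ℂ) 2 ((ν.restrict K).restrict s) :=
        ((Lp.memLp h).restrict K).restrict s
      exact hm2.integrable one_le_two
    · intro s _ _
      exact (hloc f K hKc).integrableOn
    · intro s hs _
      rw [Measure.restrict_restrict hs]
      exact key (s ∩ K) (hs.inter hKc.measurableSet)
        ((measure_mono Set.inter_subset_right).trans_lt hKc.measure_lt_top).ne
        ⟨n, Set.inter_subset_right⟩
  have hnull : ∀ n : ℕ,
      ν ({x | ¬ (h : X → ℂ) x = ⟪ψ x, f⟫} ∩ compactCovering X n) = 0 := by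
    intro n
    have h1 : (ν.restrict (compactCovering X n)) {x | ¬ (h : X → ℂ) x = ⟪ψ x, f⟫} = 0 :=
      ae_iff.mp (hres n)
    rwa [Measure.restrict_apply' (isCompact_compactCovering X n).measurableSet] at h1
  refine ae_iff.mpr ?_
  have hsub : {x | ¬ (h : X → ℂ) x = ⟪ψ x, f⟫} ⊆
      ⋃ n, ({x | ¬ (h : X → ℂ) x = ⟪ψ x, f⟫} ∩ compactCovering X n) := by
    intro x hx
    obtain ⟨n, hn⟩ := exists_mem_compactCovering x
    exact Set.mem_iUnion.mpr ⟨n, hx, hn⟩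
  exact measure_mono_null hsub (measure_iUnion_null hnull)

/-- The reverse inclusion: a coefficient function in `L²` defines an element of the
adjoint domain, with adjoint value the analysis operator. -/
lemma toLp_inner_eq
    (f : H) (hf : MemLp (fun x => ⟪ψ x, f⟫) 2 ν)
    (F : Lp ℂ 2 ν) (g : H)
    (hFg : ∀ f' : H, Integrable (fun x => (starRingEnd ℂ) (F x) * ⟪ψ x, f'⟫) ν ∧
      ∫ x, (starRingEnd ℂ) (F x) * ⟪ψ x, f'⟫ ∂ν = ⟪g, f'⟫) :
    ⟪hf.toLp (fun x => ⟪ψ x, f⟫), F⟫ = ⟪f, g⟫ := by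
  haveI : Fact ((1 : ℝ≥0∞) ≤ 2) := fact_one_le_two_ennreal
  rw [← inner_conj_symm f g, ← (hFg f).2, ← integral_conj, L2.inner_def]
  refine integral_congr_ae ?_
  filter_upwards [hf.coeFn_toLp] with x hx
  rw [RCLike.inner_apply, hx, map_mul, RingHomCompTriple.comp_apply]
  · rfl

end Aux

/-- Let `X` be a σ-compact locally compact Hausdorff space with a Borel
measure `ν` finite on compacts, and `ψ : X → H` a total family whose coefficient functions
are measurable and locally integrable.  Then the weakly defined synthesis operator `D` is
densely defined, and its adjoint is the analysis operator `C`:  a vector `f ∈ H` satisfies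
the defining property of `Dom(D*)` iff its coefficient function lies in `L²(X, ν)`, and in
that case the adjoint vector is exactly `C f`. -/
theorem synthesis_densely_defined_and_adjoint_eq_analysis
    {X : Type*} [TopologicalSpace X] [T2Space X] [LocallyCompactSpace X] [SigmaCompactSpace X]
    [MeasurableSpace X] [BorelSpace X] (ν : Measure X) [IsFiniteMeasureOnCompacts ν]
    {H : Type*} [NormedAddCommGroup H] [InnerProductSpace ℂ H] [CompleteSpace H]
    (ψ : X → H)
    (hmeas : ∀ f : H, AEMeasurable (fun x => ⟪ψ x, f⟫) ν)
    (hloc : ∀ (f : H) (K : Set X), IsCompact K →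
      IntegrableOn (fun x => ⟪ψ x, f⟫) K ν)
    (htotal : (Submodule.span ℂ (Set.range ψ)).topologicalClosure = ⊤) :
    -- Dom(D) is dense in L²(X, ν)
    Dense {F : Lp ℂ 2 ν | ∃ g : H, ∀ f : H,
        Integrable (fun x => (starRingEnd ℂ) (F x) * ⟪ψ x, f⟫) ν ∧
        ∫ x, (starRingEnd ℂ) (F x) * ⟪ψ x, f⟫ ∂ν = ⟪g, f⟫} ∧
    -- Dom(D*) = Dom(C) and D* f = C f
    ∀ f : H,
      ((∃ h : Lp ℂ 2 ν, ∀ (F : Lp ℂ 2 ν) (g : H),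
          (∀ f' : H, Integrable (fun x => (starRingEnd ℂ) (F x) * ⟪ψ x, f'⟫) ν ∧
            ∫ x, (starRingEnd ℂ) (F x) * ⟪ψ x, f'⟫ ∂ν = ⟪g, f'⟫) →
          ⟪h, F⟫ = ⟪f, g⟫) ↔
        MemLp (fun x => ⟪ψ x, f⟫) 2 ν) ∧
      ∀ (hf : MemLp (fun x => ⟪ψ x, f⟫) 2 ν) (h : Lp ℂ 2 ν),
        (∀ (F : Lp ℂ 2 ν) (g : H),
          (∀ f' : H, Integrable (fun x => (starRingEnd ℂ) (F x) * ⟪ψ x, f'⟫) ν ∧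
            ∫ x, (starRingEnd ℂ) (F x) * ⟪ψ x, f'⟫ ∂ν = ⟪g, f'⟫) →
          ⟪h, F⟫ = ⟪f, g⟫) →
        h = hf.toLp (fun x => ⟪ψ x, f⟫) := by
  haveI : Fact ((1 : ℝ≥0∞) ≤ 2) := fact_one_le_two_ennreal
  set S := {F : Lp ℂ 2 ν | ∃ g : H, ∀ f : H,
      Integrable (fun x => (starRingEnd ℂ) (F x) * ⟪ψ x, f⟫) ν ∧
      ∫ x, (starRingEnd ℂ) (F x) * ⟪ψ x, f⟫ ∂ν = ⟪g, f⟫} with hSdef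
  constructor
  · -- density
    have hzero : (0 : Lp ℂ 2 ν) ∈ S := by
      refine ⟨0, fun f => ?_⟩
      have h0 : (fun x => (starRingEnd ℂ) (((0 : Lp ℂ 2 ν) : X → ℂ) x) * ⟪ψ x, f⟫)
          =ᵐ[ν] fun _ => (0 : ℂ) := by
        filter_upwards [Lp.coeFn_zero ℂ 2 ν] with x hx
        rw [hx]
        simp
      constructor
      · exact (integrable_zero _ _ _).congr h0.symm
      · rw [integral_congr_ae h0]; simp
    have hadd : ∀ a b : Lp ℂ 2 ν, a ∈ S → b ∈ S → a + b ∈ S := by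
      rintro a b ⟨g1, hg1⟩ ⟨g2, hg2⟩
      refine ⟨g1 + g2, fun f => ?_⟩
      have hae : (fun x => (starRingEnd ℂ) (((a + b : Lp ℂ 2 ν) : X → ℂ) x) * ⟪ψ x, f⟫)
          =ᵐ[ν] fun x => (starRingEnd ℂ) ((a : X → ℂ) x) * ⟪ψ x, f⟫ +
            (starRingEnd ℂ) ((b : X → ℂ) x) * ⟪ψ x, f⟫ := by
        filter_upwards [Lp.coeFn_add a b] with x hx
        rw [hx]
        simp [add_mul]
      constructor
      · exact (((hg1 f).1.add (hg2 f).1).congr hae.symm)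
      · rw [integral_congr_ae hae, integral_add (hg1 f).1 (hg2 f).1, (hg1 f).2, (hg2 f).2,
          inner_add_left]
    let M : AddSubmonoid (Lp ℂ 2 ν) :=
      { carrier := S
        add_mem' := fun ha hb => hadd _ _ ha hb
        zero_mem' := hzero }
    intro G
    have hmem : ∀ G : Lp ℂ 2 ν, G ∈ M.topologicalClosure := by
      refine Lp.induction (by norm_num : (2 : ℝ≥0∞) ≠ ∞)
        (fun G => G ∈ M.topologicalClosure) ?_ ?_ ?_
      · intro c s hs hμs
        rw [Lp.simpleFunc.coe_indicatorConst]
        show indicatorConstLp 2 hs hμs.ne c ∈ closure S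
        refine Metric.mem_closure_iff.mpr fun ε hε => ?_
        set b : ℝ := ε / (‖c‖ + 1) with hbdef
        have hb : 0 < b := div_pos hε (by positivity)
        have htend : Tendsto (fun n => ν (s \ compactCovering X n)) atTop
            (𝓝 (ν (⋂ n, s \ compactCovering X n))) := by
          have := tendsto_measure_iInter_atTop (μ := ν)
            (s := fun n => s \ compactCovering X n)
            (fun n => (hs.diff (isCompact_compactCovering X n).measurableSet).nullMeasurableSet)
            (fun m n hmn => Set.diff_subset_diff_right (compactCovering_subset X hmn))
            ⟨0, ((measure_mono Set.diff_subset).trans_lt hμs).ne⟩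
          exact this
        have hiInter : (⋂ n, s \ compactCovering X n) = (∅ : Set X) := by
          rw [← Set.diff_iUnion, iUnion_compactCovering, Set.diff_univ]
        rw [hiInter, measure_empty] at htend
        have hev := htend.eventually_lt_const
          (show (0 : ℝ≥0∞) < ENNReal.ofReal (b ^ 2) from ENNReal.ofReal_pos.mpr (by positivity))
        obtain ⟨n, hn⟩ := hev.exists
        set K := compactCovering X n with hKdef
        have hKc : IsCompact K := isCompact_compactCovering X n
        have hsA : MeasurableSet (s ∩ K) := hs.inter hKc.measurableSet
        have hAfin : ν (s ∩ K) ≠ ⊤ := ((measure_mono Set.inter_subset_left).trans_lt hμs).ne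
        have hsd : MeasurableSet (s \ K) := hs.diff hKc.measurableSet
        have hdfin : ν (s \ K) ≠ ⊤ := ((measure_mono Set.diff_subset).trans_lt hμs).ne
        have hbd : ∀ᵐ x ∂ν, ‖(indicatorConstLp 2 hsA hAfin c : X → ℂ) x‖ ≤
            K.indicator (fun _ => ‖c‖) x := by
          filter_upwards [indicatorConstLp_coeFn (hs := hsA) (hμs := hAfin) (c := c)]
            with x hx
          rw [hx]
          by_cases hxA : x ∈ s ∩ K
          · rw [Set.indicator_of_mem hxA, Set.indicator_of_mem hxA.2]
          · rw [Set.indicator_of_notMem hxA]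
            simp only [norm_zero]
            exact Set.indicator_nonneg (fun _ _ => norm_nonneg c) x
        have hbS : indicatorConstLp 2 hsA hAfin c ∈ S :=
          mem_domD ν ψ hmeas hloc hKc _ (norm_nonneg c) hbd
        refine ⟨indicatorConstLp 2 hsA hAfin c, hbS, ?_⟩
        have hdiffeq : indicatorConstLp 2 hs hμs.ne c - indicatorConstLp 2 hsA hAfin c
            = indicatorConstLp 2 hsd hdfin c := by
          refine Lp.ext ?_
          filter_upwards [Lp.coeFn_sub (indicatorConstLp 2 hs hμs.ne c)
              (indicatorConstLp 2 hsA hAfin c),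
            indicatorConstLp_coeFn (hs := hs) (hμs := hμs.ne) (c := c),
            indicatorConstLp_coeFn (hs := hsA) (hμs := hAfin) (c := c),
            indicatorConstLp_coeFn (hs := hsd) (hμs := hdfin) (c := c)]
            with x h1 h2 h3 h4
          rw [h1, Pi.sub_apply, h2, h3, h4]
          by_cases hx1 : x ∈ s <;> by_cases hx2 : x ∈ K <;>
            simp [Set.indicator_apply, hx1, hx2]
        rw [dist_eq_norm, hdiffeq, norm_indicatorConstLp two_ne_zero ENNReal.ofNat_ne_top]
        have ht : (ν (s \ K)).toReal < b ^ 2 := ENNReal.toReal_lt_of_lt_ofReal hn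
        have ht0 : 0 ≤ (ν (s \ K)).toReal := ENNReal.toReal_nonneg
        have hsqrt : (ν (s \ K)).toReal ^ (1 / (2 : ℝ≥0∞).toReal) < b := by
          have h2r : (2 : ℝ≥0∞).toReal = 2 := by norm_num
          rw [h2r, ← Real.sqrt_eq_rpow]
          exact (Real.sqrt_lt' hb).mpr ht
        calc ‖c‖ * (ν (s \ K)).toReal ^ (1 / (2 : ℝ≥0∞).toReal)
            ≤ (‖c‖ + 1) * (ν (s \ K)).toReal ^ (1 / (2 : ℝ≥0∞).toReal) := by
              have : (0:ℝ) ≤ (ν (s \ K)).toReal ^ (1 / (2 : ℝ≥0∞).toReal) :=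
                Real.rpow_nonneg ht0 _
              nlinarith [norm_nonneg c]
          _ < (‖c‖ + 1) * b := by
              exact mul_lt_mul_of_pos_left hsqrt (by positivity)
          _ = ε := by
              rw [hbdef, mul_div_cancel₀ _ (by positivity : (‖c‖ : ℝ) + 1 ≠ 0)]
      · intro p q hp hq hdis hP hQ
        exact add_mem hP hQ
      · exact isClosed_closure (s := S)
    exact hmem G
  · intro f
    constructor
    · constructor
      · rintro ⟨h, hp⟩
        exact (Lp.memLp h).ae_eq (adjoint_ae_eq ν ψ hmeas hloc f h hp)
      · intro hf
        exact ⟨hf.toLp _, fun F g hFg => toLp_inner_eq ν ψ f hf F g hFg⟩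
    · intro hf h hp
      exact Lp.ext ((adjoint_ae_eq ν ψ hmeas hloc f h hp).trans hf.coeFn_toLp.symm)
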